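/- Let R = 𝔽₂[T⁴,T⁵,T⁶] ⊆ 𝔽₂[T]. Then R is isomorphic to 𝔽₂[X,Y,Z]/(XZ−Y², X³−Z²), and the map D = Y∂/∂Y induces a well-defined derivation on R, i.e., D(XZ−Y²) and D(X³−Z²) lie in the ideal (XZ−Y², X³−Z²) of 𝔽₂[X,Y,Z]. -/

import Mathlib

set_option synthInstance.maxHeartbeats 1000000
set_option maxHeartbeats 1000000

open MvPolynomial

namespace Stmt4Aux

noncomputable section

abbrev kk := ZMod 2
abbrev S := MvPolynomial (Fin 3) kk
abbrev P := Polynomial kk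

def φ : S →ₐ[kk] P := aeval ![Polynomial.X ^ 4, Polynomial.X ^ 5, Polynomial.X ^ 6]

def Ig : Ideal S := Ideal.span {(X 0 : S) * X 2 - X 1 ^ 2, (X 0 : S) ^ 3 - X 2 ^ 2}

def mk : S →+* S ⧸ Ig := Ideal.Quotient.mk Ig

lemma g1_mem : (X 0 : S) * X 2 - X 1 ^ 2 ∈ Ig := Ideal.subset_span (by left; rfl)
lemma g2_mem : (X 0 : S) ^ 3 - X 2 ^ 2 ∈ Ig := Ideal.subset_span (by right; rfl)

lemma red1 (a b c : ℕ) :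
    mk (X 0 ^ a * X 1 ^ (b + 2) * X 2 ^ c) = mk (X 0 ^ (a+1) * X 1 ^ b * X 2 ^ (c+1)) := by
  rw [mk, Ideal.Quotient.eq]
  have h : X 0 ^ a * X 1 ^ (b + 2) * X 2 ^ c - X 0 ^ (a+1) * X 1 ^ b * X 2 ^ (c+1)
      = (-(X 0 ^ a * X 1 ^ b * X 2 ^ c)) * ((X 0 : S) * X 2 - X 1 ^ 2) := by ring
  rw [h]
  exact Ideal.mul_mem_left _ _ g1_mem

lemma red2 (a b c : ℕ) :
    mk (X 0 ^ a * X 1 ^ b * X 2 ^ (c + 2)) = mk (X 0 ^ (a+3) * X 1 ^ b * X 2 ^ c) := by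
  rw [mk, Ideal.Quotient.eq]
  have h : X 0 ^ a * X 1 ^ b * X 2 ^ (c + 2) - X 0 ^ (a+3) * X 1 ^ b * X 2 ^ c
      = (-(X 0 ^ a * X 1 ^ b * X 2 ^ c)) * ((X 0 : S) ^ 3 - X 2 ^ 2) := by ring
  rw [h]
  exact Ideal.mul_mem_left _ _ g2_mem

def s : ℕ → S := fun m =>
  if m % 4 = 0 then X 0 ^ (m / 4)
  else if m % 4 = 1 then X 0 ^ ((m - 5) / 4) * X 1
  else if m % 4 = 2 then X 0 ^ ((m - 6) / 4) * X 2
  else X 0 ^ ((m - 11) / 4) * X 1 * X 2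

lemma normalAux : ∀ (n a b c : ℕ), b + c ≤ n →
    mk (X 0 ^ a * X 1 ^ b * X 2 ^ c) = mk (s (4*a + 5*b + 6*c)) := by
  intro n
  induction n with
  | zero =>
    intro a b c h
    obtain ⟨rfl, rfl⟩ : b = 0 ∧ c = 0 := by omega
    simp [s, show (4*a+5*0+6*0) % 4 = 0 from by omega,
      show (4*a+5*0+6*0) / 4 = a from by omega]
  | succ n ih =>
    intro a b c h
    rcases b with _ | _ | b
    · rcases c with _ | _ | c
      · simp [s, show (4*a+5*0+6*0) % 4 = 0 from by omega,
          show (4*a+5*0+6*0) / 4 = a from by omega]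
      · have h1 : (4*a+5*0+6*1) % 4 = 2 := by omega
        have h2 : (4*a+5*0+6*1 - 6) / 4 = a := by omega
        simp [s, h1, h2]
      · rw [red2, ih _ _ c (by omega)]
        congr 2
        omega
    · rcases c with _ | _ | c
      · have h1 : (4*a+5*1+6*0) % 4 = 1 := by omega
        have h2 : (4*a+5*1+6*0 - 5) / 4 = a := by omega
        simp [s, h1, h2]
      · have h1 : (4*a+5*1+6*1) % 4 = 3 := by omega
        have h2 : (4*a+5*1+6*1 - 11) / 4 = a := by omega
        simp [s, h1, h2, mul_assoc]
      · rw [red2, ih _ _ c (by omega)]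
        congr 2
        omega
    · rw [show b + 1 + 1 = b + 2 from rfl, red1, ih _ _ _ (by omega)]
      congr 2
      omega

lemma mk_eq (a b c : ℕ) :
    mk (X 0 ^ a * X 1 ^ b * X 2 ^ c) = mk (s (4*a + 5*b + 6*c)) :=
  normalAux (b + c) a b c le_rfl

def L (p : P) : S ⧸ Ig := p.sum fun m c => mk (MvPolynomial.C c * s m)

lemma L_add (p q : P) : L (p + q) = L p + L q :=
  Polynomial.sum_add_index p q _ (fun m => by simp) (fun m c d => by
    simp [map_add, add_mul])

lemma L_monomial (m : ℕ) (c : kk) : L (Polynomial.monomial m c) = mk (MvPolynomial.C c * s m) :=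
  Polynomial.sum_monomial_index _ _ (by simp)

lemma L_phi (f : S) : L (φ f) = mk f := by
  induction f using MvPolynomial.induction_on' with
  | add p q hp hq => rw [map_add, L_add, hp, hq, mk, map_add]
  | monomial u c =>
    have hphi : φ (monomial u c) = Polynomial.monomial (4 * u 0 + 5 * u 1 + 6 * u 2) c := by
      rw [φ, aeval_monomial, Finsupp.prod_fintype _ _ (fun i => pow_zero _)]
      rw [Fin.prod_univ_three]
      simp only [Matrix.cons_val_zero, Matrix.cons_val_one, Matrix.head_cons,
        Matrix.cons_val_two, Matrix.tail_cons, ← pow_mul]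
      rw [← Polynomial.C_mul_X_pow_eq_monomial, Polynomial.algebraMap_eq]
      ring
    rw [hphi, L_monomial, monomial_eq, Finsupp.prod_fintype _ _ (fun i => pow_zero _),
      Fin.prod_univ_three]
    rw [map_mul, map_mul, mk_eq]

lemma span_le_ker : Ig ≤ RingHom.ker φ := by
  rw [Ig, Ideal.span_le]
  rintro g hg
  simp only [Set.mem_insert_iff, Set.mem_singleton_iff] at hg
  rcases hg with rfl | rfl <;>
  · simp only [SetLike.mem_coe, RingHom.mem_ker, AlgHom.coe_ringHom_mk, map_sub, map_mul,
      map_pow, φ, aeval_X, Matrix.cons_val_zero, Matrix.cons_val_one, Matrix.head_cons,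
      Matrix.cons_val_two, Matrix.tail_cons]
    ring

lemma ker_eq : RingHom.ker φ = Ig := by
  ext f
  constructor
  · intro hf
    have h0 : L (φ f) = 0 := by
      rw [RingHom.mem_ker] at hf
      rw [hf, L, Polynomial.sum_zero_index]
    rw [L_phi] at h0
    exact (Ideal.Quotient.eq_zero_iff_mem).1 h0
  · intro hf
    exact span_le_ker hf


def Dv : Derivation kk S S := mkDerivation kk ![(0 : S), X 1, 0]

lemma Dg1 : Dv ((X 0 : S) * X 2 - X 1 ^ 2) = 0 := by
  simp [Dv, Derivation.leibniz, mkDerivation_X, two_smul, CharTwo.add_self_eq_zero]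

lemma Dg2 : Dv ((X 0 : S) ^ 3 - X 2 ^ 2) = 0 := by
  simp [Dv, Derivation.leibniz, Derivation.leibniz_pow, mkDerivation_X]

lemma D_mem : ∀ f ∈ Ig, Dv f ∈ Ig := by
  intro f hf
  refine Submodule.span_induction ?_ ?_ ?_ ?_ hf
  · rintro g hg
    simp only [Set.mem_insert_iff, Set.mem_singleton_iff] at hg
    rcases hg with rfl | rfl
    · rw [Dg1]; exact Ig.zero_mem
    · rw [Dg2]; exact Ig.zero_mem
  · simp only [map_zero]; exact Ig.zero_mem
  · intro x y _ _ hx hy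
    rw [map_add]; exact Ig.add_mem hx hy
  · intro a x hx hDx
    rw [smul_eq_mul, Derivation.leibniz, smul_eq_mul, smul_eq_mul]
    exact Ig.add_mem (Ideal.mul_mem_left _ _ hDx) (Ideal.mul_mem_right _ _ hx)

lemma Dg1_mem : Dv ((X 0 : S) * X 2 - X 1 ^ 2) ∈ Ig := by rw [Dg1]; exact Ig.zero_mem
lemma Dg2_mem : Dv ((X 0 : S) ^ 3 - X 2 ^ 2) ∈ Ig := by rw [Dg2]; exact Ig.zero_mem

def finalEquiv : (S ⧸ Ig) ≃ₐ[kk]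
    Algebra.adjoin kk ({Polynomial.X ^ 4, Polynomial.X ^ 5, Polynomial.X ^ 6} : Set P) := by
  refine ((Ideal.quotientEquivAlgOfEq kk ker_eq.symm).trans
    (Ideal.quotientKerEquivRange φ)).trans (Subalgebra.equivOfEq _ _ ?_)
  rw [φ, ← Algebra.adjoin_range_eq_range_aeval]
  congr 1
  ext x
  simp only [Matrix.range_cons, Matrix.range_empty, Set.union_empty, Set.mem_insert_iff,
    Set.mem_singleton_iff, Set.union_singleton, Set.mem_union]
  tauto

end

end Stmt4Aux

/-- The ring `R = 𝔽₂[T⁴,T⁵,T⁶] ⊆ 𝔽₂[T]` is isomorphic to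
`𝔽₂[X,Y,Z]/(XZ−Y², X³−Z²)`, and the derivation `D = Y∂/∂Y` of `𝔽₂[X,Y,Z]`
(sending `X ↦ 0, Y ↦ Y, Z ↦ 0`) maps both relations `XZ−Y²` and `X³−Z²` into the
ideal `(XZ−Y², X³−Z²)`, hence induces a well-defined derivation on `R`. -/
theorem stmt4 :
    let S : Type := MvPolynomial (Fin 3) (ZMod 2)
    let I : Ideal S :=
      Ideal.span {(X 0 : S) * X 2 - X 1 ^ 2, (X 0 : S) ^ 3 - X 2 ^ 2}
    let A : Subalgebra (ZMod 2) (Polynomial (ZMod 2)) :=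
      Algebra.adjoin (ZMod 2)
        {Polynomial.X ^ 4, Polynomial.X ^ 5, Polynomial.X ^ 6}
    let D : Derivation (ZMod 2) S S :=
      MvPolynomial.mkDerivation (ZMod 2) ![(0 : S), X 1, 0]
    Nonempty ((S ⧸ I) ≃ₐ[ZMod 2] A) ∧
    D ((X 0 : S) * X 2 - X 1 ^ 2) ∈ I ∧ D ((X 0 : S) ^ 3 - X 2 ^ 2) ∈ I ∧
    (∀ f ∈ I, D f ∈ I) := by
  exact ⟨⟨Stmt4Aux.finalEquiv⟩,
    Stmt4Aux.Dg1_mem,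
    Stmt4Aux.Dg2_mem,
    Stmt4Aux.D_mem⟩
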